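/- Let E be a pseudo effect algebra satisfying (RDP) and let m be a Jordan signed measure on E. Define v_m : E → ℝ by v_m(x) := sup{|m(x₁)| + ⋯ + |m(xₙ)| : x = x₁ + ⋯ + xₙ, x₁, …, xₙ ∈ E, n ≥ 1}. Then v_m = |m|, where |m| = m⁺ + m⁻ is the absolute value of m in the lattice J(E). -/

import Mathlib

/-- A pseudo effect algebra: a partial algebra `(E; +, 0, 1)` where the partial
addition is encoded as `padd : E → E → Option E` (`padd a b = some c` means
`a + b` is defined and equals `c`). -/
class PseudoEffectAlgebra (E : Type) where
  padd : E → E → Option E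
  pzero : E
  pone : E
  /-- (i) `a+b` and `(a+b)+c` exist iff `b+c` and `a+(b+c)` exist ... -/
  assoc_defined : ∀ a b c : E,
    (∃ x, padd a b = some x ∧ (padd x c).isSome) ↔
      (∃ y, padd b c = some y ∧ (padd a y).isSome)
  /-- ... and in this case `(a+b)+c = a+(b+c)`. -/
  assoc_eq : ∀ a b c x y : E, padd a b = some x → padd b c = some y →
    padd x c = padd a y
  /-- (ii) there is exactly one `d` with `a + d = 1`. -/
  exists_unique_right : ∀ a : E, ∃! d, padd a d = some pone
  /-- (ii) there is exactly one `e` with `e + a = 1`. -/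
  exists_unique_left : ∀ a : E, ∃! e, padd e a = some pone
  /-- (iii) if `a+b` exists, there are `d, e` with `a+b = d+a = b+e`. -/
  shift : ∀ a b c : E, padd a b = some c →
    ∃ d e, padd d a = some c ∧ padd b e = some c
  /-- (iv) if `1+a` exists then `a = 0`. -/
  one_add : ∀ a : E, (padd pone a).isSome → a = pzero
  /-- (iv) if `a+1` exists then `a = 0`. -/
  add_one : ∀ a : E, (padd a pone).isSome → a = pzero

namespace PseudoEffectAlgebra

variable {E : Type} [PseudoEffectAlgebra E]

/-- The induced partial order: `a ≤ b` iff `b = a + c` for some `c ∈ E`. -/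
def pLe (a b : E) : Prop := ∃ c, padd a c = some b

/-- The Riesz Decomposition Property (RDP). -/
def RDP (E : Type) [PseudoEffectAlgebra E] : Prop :=
  ∀ a₁ a₂ b₁ b₂ c : E, padd a₁ a₂ = some c → padd b₁ b₂ = some c →
    ∃ d₁ d₂ d₃ d₄ : E, padd d₁ d₂ = some a₁ ∧ padd d₃ d₄ = some a₂ ∧
      padd d₁ d₃ = some b₁ ∧ padd d₂ d₄ = some b₂

/-- A signed measure on `E`. -/
def IsSignedMeasure (m : E → ℝ) : Prop :=
  ∀ a b c : E, padd a b = some c → m c = m a + m b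

/-- A (positive) measure on `E`. -/
def IsMeasure (m : E → ℝ) : Prop :=
  IsSignedMeasure m ∧ ∀ a : E, 0 ≤ m a

/-- A state on `E`. -/
def IsState (s : E → ℝ) : Prop := IsMeasure s ∧ s pone = 1

/-- A Jordan signed measure: a difference of two measures. -/
def IsJordan (m : E → ℝ) : Prop :=
  ∃ m₁ m₂ : E → ℝ, IsMeasure m₁ ∧ IsMeasure m₂ ∧ m = m₁ - m₂

/-- `m ≤⁺ m'` iff `m' - m` is a (positive) measure. -/
def MLe (m m' : E → ℝ) : Prop := IsMeasure (m' - m)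

/-- The (partial) sum `x₁ + ⋯ + xₙ` of a nonempty list of elements of `E`. -/
def lsum : List E → Option E
  | [] => some pzero
  | [a] => some a
  | a :: b :: l => (lsum (b :: l)).bind (fun s => padd a s)

/-- `m` is the supremum, in the po-group `J(E)` of Jordan signed measures ordered
by `≤⁺`, of the set `S`. -/
def IsSupIn (S : Set (E → ℝ)) (m : E → ℝ) : Prop :=
  IsJordan m ∧ (∀ t ∈ S, MLe t m) ∧
    ∀ h : E → ℝ, IsJordan h → (∀ t ∈ S, MLe t h) → MLe m h

/-- `m` is the infimum, in the po-group `J(E)` of Jordan signed measures ordered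
by `≤⁺`, of the set `S`. -/
def IsInfIn (S : Set (E → ℝ)) (m : E → ℝ) : Prop :=
  IsJordan m ∧ (∀ t ∈ S, MLe m t) ∧
    ∀ h : E → ℝ, IsJordan h → (∀ t ∈ S, MLe h t) → MLe h m

-- auxiliary lemmas (to be inserted before the theorem)

open scoped Classical

/-- Reassociation: if `a+b` and `(a+b)+c` exist, then `b+c` and `a+(b+c)` exist
and agree. -/
lemma assoc4 {a b c ab abc : E} (h1 : padd a b = some ab)
    (h2 : padd ab c = some abc) :
    ∃ bc, padd b c = some bc ∧ padd a bc = some abc := by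
  obtain ⟨y, hy, hys⟩ := (assoc_defined a b c).1 ⟨ab, h1, by rw [h2]; rfl⟩
  have heq := assoc_eq a b c ab y h1 hy
  exact ⟨y, hy, by rw [← heq, h2]⟩

/-- Reassociation, the other direction. -/
lemma assoc4' {a b c bc abc : E} (h1 : padd b c = some bc)
    (h2 : padd a bc = some abc) :
    ∃ ab, padd a b = some ab ∧ padd ab c = some abc := by
  obtain ⟨x, hx, _⟩ := (assoc_defined a b c).2 ⟨bc, h1, by rw [h2]; rfl⟩
  have heq := assoc_eq a b c x bc hx h1
  exact ⟨x, hx, by rw [heq, h2]⟩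

lemma padd_zero_one : padd (pzero : E) pone = some pone := by
  obtain ⟨e, he, _⟩ := exists_unique_left (pone : E)
  have h0 : e = pzero := add_one e (by rw [he]; rfl)
  rwa [h0] at he

lemma padd_one_zero : padd (pone : E) pzero = some pone := by
  obtain ⟨d, hd, _⟩ := exists_unique_right (pone : E)
  have h0 : d = pzero := one_add d (by rw [hd]; rfl)
  rwa [h0] at hd

lemma zero_padd (a : E) : padd pzero a = some a := by
  obtain ⟨d, hd, _⟩ := exists_unique_right a
  obtain ⟨x, hx, hxd⟩ := assoc4' hd padd_zero_one
  obtain ⟨e, _, huniq⟩ := exists_unique_left d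
  rw [hx, huniq x hxd, ← huniq a hd]

lemma padd_zero (a : E) : padd a pzero = some a := by
  obtain ⟨e, he, _⟩ := exists_unique_left a
  obtain ⟨y, hy, hey⟩ := assoc4 he padd_one_zero
  obtain ⟨d, _, huniq⟩ := exists_unique_right e
  rw [hy, huniq y hey, ← huniq a he]

lemma pLe_refl (a : E) : pLe a a := ⟨pzero, padd_zero a⟩

lemma pLe_trans {a b c : E} (hab : pLe a b) (hbc : pLe b c) : pLe a c := by
  obtain ⟨s, hs⟩ := hab
  obtain ⟨t, ht⟩ := hbc
  obtain ⟨y, _, hay⟩ := assoc4 hs ht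
  exact ⟨y, hay⟩

lemma signed_zero {μ : E → ℝ} (hμ : IsSignedMeasure μ) : μ pzero = 0 := by
  have := hμ pzero pzero pzero (padd_zero pzero)
  linarith

lemma measure_lsum {μ : E → ℝ} (hμ : IsSignedMeasure μ) :
    ∀ l : List E, ∀ x, lsum l = some x → μ x = (l.map μ).sum := by
  intro l
  induction l with
  | nil =>
      intro x h
      have hx : (pzero : E) = x := by simpa [lsum] using h
      simp [← hx, signed_zero hμ]
  | cons a t ih =>
      intro x h
      cases t with
      | nil =>
          have hx : a = x := by simpa [lsum] using h
          simp [← hx]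
      | cons b l' =>
          rw [show lsum (a :: b :: l') = (lsum (b :: l')).bind (fun s => padd a s)
            from rfl] at h
          obtain ⟨s, hs, has⟩ := Option.bind_eq_some_iff.1 h
          rw [List.map_cons, List.sum_cons, ← ih s hs, ← hμ a s x has]

lemma jordan_signed {μ : E → ℝ} (hμ : IsJordan μ) : IsSignedMeasure μ := by
  obtain ⟨m₁, m₂, h₁, h₂, rfl⟩ := hμ
  intro a b c h
  have e₁ := h₁.1 a b c h
  have e₂ := h₂.1 a b c h
  simp only [Pi.sub_apply]
  linarith

lemma measure_add {f g : E → ℝ} (hf : IsMeasure f) (hg : IsMeasure g) :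
    IsMeasure (f + g) := by
  refine ⟨fun a b c h => ?_, fun a => ?_⟩
  · have := hf.1 a b c h; have := hg.1 a b c h
    simp only [Pi.add_apply]; linarith
  · have := hf.2 a; have := hg.2 a
    simp only [Pi.add_apply]; linarith

lemma measure_zero' : IsMeasure (0 : E → ℝ) :=
  ⟨fun a b c _ => by simp, fun a => le_refl _⟩

lemma jordan_sub {f g : E → ℝ} (hf : IsJordan f) (hg : IsJordan g) :
    IsJordan (f - g) := by
  obtain ⟨f₁, f₂, hf₁, hf₂, rfl⟩ := hf
  obtain ⟨g₁, g₂, hg₁, hg₂, rfl⟩ := hg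
  exact ⟨f₁ + g₂, f₂ + g₁, measure_add hf₁ hg₂, measure_add hf₂ hg₁, by
    funext a; simp; ring⟩

/-- The candidate for `m⁺`: `p m a = sup { m y : y ≤ a }`. -/
noncomputable def pfun (μ : E → ℝ) (a : E) : ℝ :=
  sSup {r : ℝ | ∃ y, pLe y a ∧ r = μ y}

lemma pset_nonempty (μ : E → ℝ) (a : E) :
    {r : ℝ | ∃ y, pLe y a ∧ r = μ y}.Nonempty :=
  ⟨μ a, a, pLe_refl a, rfl⟩

lemma pset_bdd {μ : E → ℝ} (hμ : IsJordan μ) (a : E) :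
    BddAbove {r : ℝ | ∃ y, pLe y a ∧ r = μ y} := by
  obtain ⟨m₁, m₂, h₁, h₂, rfl⟩ := hμ
  refine ⟨m₁ a, ?_⟩
  rintro r ⟨y, ⟨c, hc⟩, rfl⟩
  have := h₁.1 y c a hc
  have := h₁.2 c
  have := h₂.2 y
  simp only [Pi.sub_apply]
  linarith

lemma le_pfun {μ : E → ℝ} (hμ : IsJordan μ) {y a : E} (h : pLe y a) :
    μ y ≤ pfun μ a :=
  le_csSup (pset_bdd hμ a) ⟨y, h, rfl⟩

lemma self_le_pfun {μ : E → ℝ} (hμ : IsJordan μ) (a : E) : μ a ≤ pfun μ a :=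
  le_pfun hμ (pLe_refl a)

lemma pfun_nonneg {μ : E → ℝ} (hμ : IsJordan μ) (a : E) : 0 ≤ pfun μ a := by
  have h0 : pLe (pzero : E) a := ⟨a, zero_padd a⟩
  have := le_pfun hμ h0
  rwa [signed_zero (jordan_signed hμ)] at this

lemma pfun_le {μ : E → ℝ} {a : E} {r : ℝ}
    (h : ∀ y, pLe y a → μ y ≤ r) : pfun μ a ≤ r :=
  csSup_le (pset_nonempty μ a) (by rintro s ⟨y, hy, rfl⟩; exact h y hy)

/-- Additivity of `pfun`, the key use of (RDP). -/
lemma pfun_additive (hRDP : RDP E) {μ : E → ℝ} (hμ : IsJordan μ)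
    {a b c : E} (hab : padd a b = some c) :
    pfun μ c = pfun μ a + pfun μ b := by
  have hμs := jordan_signed hμ
  have hle : pfun μ c ≤ pfun μ a + pfun μ b := by
    refine pfun_le fun y hy => ?_
    obtain ⟨y₁, hy₁⟩ := hy
    obtain ⟨d₁, d₂, d₃, d₄, h12, _, h13, h24⟩ := hRDP y y₁ a b c hy₁ hab
    have hy' : μ y = μ d₁ + μ d₂ := hμs d₁ d₂ y h12
    have h1 : μ d₁ ≤ pfun μ a := le_pfun hμ ⟨d₃, h13⟩
    have h2 : μ d₂ ≤ pfun μ b := le_pfun hμ ⟨d₄, h24⟩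
    linarith
  have key : ∀ u, pLe u a → ∀ w, pLe w b → μ u + μ w ≤ pfun μ c := by
    rintro u ⟨u₁, hu⟩ w ⟨w₁, hw⟩
    obtain ⟨d, e, hd, -⟩ := shift u u₁ a hu
    obtain ⟨y, huy, hdy⟩ := assoc4 hd hab
    obtain ⟨q, hq, hqw⟩ := assoc4' hw huy
    obtain ⟨d', e', -, hye⟩ := shift d y c hdy
    have hqc : pLe q c := pLe_trans ⟨w₁, hqw⟩ ⟨e', hye⟩
    have := le_pfun hμ hqc
    rw [hμs u w q hq] at this
    exact this
  have hge : pfun μ a + pfun μ b ≤ pfun μ c := by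
    have h1 : pfun μ a ≤ pfun μ c - pfun μ b := by
      refine pfun_le fun u hu => ?_
      have h2 : pfun μ b ≤ pfun μ c - μ u :=
        pfun_le fun w hw => by linarith [key u hu w hw]
      linarith
    linarith
  linarith

lemma pfun_measure (hRDP : RDP E) {μ : E → ℝ} (hμ : IsJordan μ) :
    IsMeasure (pfun μ) :=
  ⟨fun a b c h => pfun_additive hRDP hμ h, pfun_nonneg hμ⟩

lemma pfun_jordan (hRDP : RDP E) {μ : E → ℝ} (hμ : IsJordan μ) :
    IsJordan (pfun μ) :=
  ⟨pfun μ, 0, pfun_measure hRDP hμ, measure_zero', (sub_zero _).symm⟩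

lemma mle_apply {f g : E → ℝ} (h : MLe f g) (a : E) : f a ≤ g a := by
  have := h.2 a
  simp only [Pi.sub_apply] at this
  linarith

lemma list_sum_sub (f g : E → ℝ) (l : List E) :
    (l.map (fun y => f y - g y)).sum = (l.map f).sum - (l.map g).sum := by
  induction l with
  | nil => simp
  | cons a t ih => simp [ih]; ring


/-- Proposition 4.6: for a Jordan signed measure `m` on a pseudo
effect algebra with (RDP), the total variation
`v_m(x) = sup{|m(x₁)| + ⋯ + |m(xₙ)| : x = x₁ + ⋯ + xₙ}` equals
`|m| = m⁺ + m⁻`, where `m⁺ = m ⋁ 0` and `m⁻ = -(m ⋀ 0)` in `J(E)`. -/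
theorem stmt12 (hRDP : RDP E) (m : E → ℝ) (hm : IsJordan m)
    (mp mi : E → ℝ)
    (hp : IsSupIn {m, 0} mp)    -- `mp = m⁺ = m ⋁ 0`
    (hi : IsInfIn {m, 0} mi) :  -- `-mi = m⁻ = -(m ⋀ 0)`
    ∀ x : E, sSup {r : ℝ | ∃ l : List E, l ≠ [] ∧ lsum l = some x ∧
      r = (l.map (fun y => |m y|)).sum} = mp x + -(mi x) := by
  have hms : IsSignedMeasure m := jordan_signed hm
  have hmemm : m ∈ ({m, 0} : Set (E → ℝ)) := by simp
  have hmem0 : (0 : E → ℝ) ∈ ({m, 0} : Set (E → ℝ)) := by simp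
  have hmp_m : IsMeasure (mp - m) := hp.2.1 m hmemm
  have hmp : IsMeasure mp := by
    have := hp.2.1 0 hmem0; unfold MLe at this; rwa [sub_zero] at this
  have hm_mi : IsMeasure (m - mi) := hi.2.1 m hmemm
  have hmi_0 : IsMeasure (0 - mi) := hi.2.1 0 hmem0
  have hmis : IsSignedMeasure mi := jordan_signed hi.1
  -- pointwise inequalities
  have h_m_le_mp : ∀ y, m y ≤ mp y := fun y => by
    have := hmp_m.2 y; simp only [Pi.sub_apply] at this; linarith
  have h_mp_nonneg : ∀ y, 0 ≤ mp y := hmp.2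
  have h_mi_le_m : ∀ y, mi y ≤ m y := fun y => by
    have := hm_mi.2 y; simp only [Pi.sub_apply] at this; linarith
  have h_mi_nonpos : ∀ y, mi y ≤ 0 := fun y => by
    have := hmi_0.2 y; simp only [Pi.sub_apply, Pi.zero_apply] at this; linarith
  -- `mi = m - mp` (i.e. `m⁺ + m⁻ = m⁺ - (m ∧ 0)`)
  have hmi_eq : ∀ y, mi y = m y - mp y := by
    have h1 : MLe mi (m - mp) := by
      have hJ : IsJordan (m - mi) := jordan_sub hm hi.1
      have hA : MLe m (m - mi) := by
        show IsMeasure _; rw [sub_right_comm, sub_self]; exact hmi_0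
      have hB : MLe 0 (m - mi) := by show IsMeasure _; rw [sub_zero]; exact hm_mi
      have hsup : MLe mp (m - mi) := by
        refine hp.2.2 (m - mi) hJ ?_
        rintro t ht
        rcases ht with rfl | ht
        · exact hA
        · rw [Set.mem_singleton_iff] at ht; rw [ht]; exact hB
      unfold MLe at hsup ⊢
      rwa [sub_right_comm] at hsup
    have h2 : MLe (m - mp) mi := by
      refine hi.2.2 (m - mp) (jordan_sub hm hp.1) ?_
      rintro t ht
      rcases ht with rfl | ht
      · show IsMeasure _; rw [sub_sub_cancel]; exact hmp
      · rw [Set.mem_singleton_iff] at ht; rw [ht]; show IsMeasure _; rw [zero_sub, neg_sub]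
        exact hmp_m
    intro y
    have a1 := mle_apply h1 y
    have a2 := mle_apply h2 y
    simp only [Pi.sub_apply] at a1 a2
    linarith
  -- `mp ≤ pfun m`
  have h_mp_le_p : ∀ y, mp y ≤ pfun m y := by
    have hJ : IsJordan (pfun m) := pfun_jordan hRDP hm
    have hsup : MLe mp (pfun m) := by
      refine hp.2.2 (pfun m) hJ ?_
      rintro t ht
      rcases ht with rfl | ht
      · exact ⟨fun a b c h => by
            have h1 := pfun_additive hRDP hm h
            have h2 := hms a b c h
            simp only [Pi.sub_apply]; linarith,
          fun a => by
            simp only [Pi.sub_apply]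
            linarith [self_le_pfun hm a]⟩
      · rw [Set.mem_singleton_iff] at ht; rw [ht]; show IsMeasure _; rw [sub_zero]
        exact pfun_measure hRDP hm
    exact mle_apply hsup
  intro x
  set S := {r : ℝ | ∃ l : List E, l ≠ [] ∧ lsum l = some x ∧
      r = (l.map (fun y => |m y|)).sum} with hS
  have hSne : S.Nonempty := ⟨|m x|, [x], by simp, rfl, by simp⟩
  -- upper bound: each decomposition sum is at most `mp x - mi x`
  have hub : ∀ r ∈ S, r ≤ mp x + -(mi x) := by
    rintro r ⟨l, -, hl, rfl⟩
    have h1 : mp x = (l.map mp).sum := measure_lsum hmp.1 l x hl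
    have h2 : mi x = (l.map mi).sum := measure_lsum hmis l x hl
    have h3 : (l.map (fun y => |m y|)).sum ≤ (l.map (fun y => mp y - mi y)).sum := by
      refine List.sum_le_sum fun y _ => ?_
      rw [abs_le]
      constructor
      · linarith [h_mi_le_m y, h_mp_nonneg y]
      · linarith [h_m_le_mp y, h_mi_nonpos y]
    rw [list_sum_sub] at h3
    linarith
  have hbdd : BddAbove S := ⟨mp x + -(mi x), hub⟩
  refine le_antisymm (csSup_le hSne hub) ?_
  -- lower bound
  have key : ∀ y, pLe y x → 2 * m y - m x ≤ sSup S := by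
    rintro y ⟨y', hy⟩
    have hmem : |m y| + (|m y'| + 0) ∈ S := by
      refine ⟨[y, y'], by simp, ?_, by simp⟩
      show (lsum [y']).bind (fun s => padd y s) = some x
      rw [show lsum [y'] = some y' from rfl, Option.bind_some, hy]
    have hle := le_csSup hbdd hmem
    have hxy : m x = m y + m y' := hms y y' x hy
    have := le_abs_self (m y)
    have := neg_abs_le (m y')
    linarith
  have hpx : pfun m x ≤ (sSup S + m x) / 2 :=
    pfun_le fun y hy => by linarith [key y hy]
  have := h_mp_le_p x
  rw [hmi_eq x]
  linarith


end PseudoEffectAlgebra
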